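/- Let M be a compact connected Riemannian manifold and L a family of smooth vector fields on M. Then the following are equivalent: (1) L is globally hypoelliptic in M; (2) the real span of L is globally hypoelliptic in M; (3) the Lie algebra generated by L is globally hypoelliptic in M. -/

import Mathlib

/-- Global hypoellipticity of a family `S` of operators (vector fields acting on the space
`V` of distributions on a compact manifold `M`): any distribution `u` with `X u` smooth for
all `X ∈ S` is itself smooth.  `C` is the subspace of smooth distributions. -/
def IsGloballyHypoelliptic {V : Type*} [AddCommGroup V] [Module ℝ V]
    (C : Submodule ℝ V) (S : Set (Module.End ℝ V)) : Prop :=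
  ∀ u : V, (∀ X ∈ S, X u ∈ C) → u ∈ C

/-!
For a family `L` of smooth vector fields on a compact manifold `M` (acting as endomorphisms
of the space `V = D'(M)` of distributions, each mapping smooth functions to smooth
functions), the following are equivalent: `L` is globally hypoelliptic, its real span is
globally hypoelliptic, and the Lie algebra it generates (inside the endomorphisms, with the
commutator bracket) is globally hypoelliptic.
-/
attribute [local instance] LieRing.ofAssociativeRing

theorem globally_hypoelliptic_span_lie_iff
    {V : Type*} [AddCommGroup V] [Module ℝ V]
    (C : Submodule ℝ V)
    (L : Set (Module.End ℝ V))
    (hstable : ∀ X ∈ L, ∀ u ∈ C, X u ∈ C) :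
    (IsGloballyHypoelliptic C L ↔
      IsGloballyHypoelliptic C (Submodule.span ℝ L : Set (Module.End ℝ V))) ∧
    (IsGloballyHypoelliptic C L ↔
      IsGloballyHypoelliptic C
        (LieSubalgebra.lieSpan ℝ (Module.End ℝ V) L : Set (Module.End ℝ V))) := by
  -- key: if `X u ∈ C` for all `X ∈ L`, then the same holds for all `X` in the Lie span
  have key : ∀ u : V, (∀ X ∈ L, X u ∈ C) →
      ∀ X ∈ LieSubalgebra.lieSpan ℝ (Module.End ℝ V) L, X u ∈ C := by
    intro u hu
    let A : LieSubalgebra ℝ (Module.End ℝ V) :=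
      { carrier := {X | X u ∈ C ∧ ∀ v ∈ C, X v ∈ C}
        add_mem' := by
          rintro X Y ⟨h1, h2⟩ ⟨h3, h4⟩
          exact ⟨C.add_mem h1 h3, fun v hv => C.add_mem (h2 v hv) (h4 v hv)⟩
        zero_mem' := ⟨C.zero_mem, fun v _ => C.zero_mem⟩
        smul_mem' := by
          rintro c X ⟨h1, h2⟩
          exact ⟨C.smul_mem c h1, fun v hv => C.smul_mem c (h2 v hv)⟩
        lie_mem' := by
          rintro X Y ⟨h1, h2⟩ ⟨h3, h4⟩
          have hb : ∀ w : V, w ∈ C → X w ∈ C → Y w ∈ C → ⁅X, Y⁆ w ∈ C := by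
            intro w hw hXw hYw
            have : ⁅X, Y⁆ w = X (Y w) - Y (X w) := by
              simp [Ring.lie_def, LinearMap.sub_apply, Module.End.mul_apply]
            rw [this]
            exact C.sub_mem (h2 _ hYw) (h4 _ hXw)
          refine ⟨?_, fun v hv => ?_⟩
          · have : ⁅X, Y⁆ u = X (Y u) - Y (X u) := by
              simp [Ring.lie_def, LinearMap.sub_apply, Module.End.mul_apply]
            rw [this]
            exact C.sub_mem (h2 _ h3) (h4 _ h1)
          · exact hb v hv (h2 v hv) (h4 v hv) }
    have hLA : L ⊆ (A : Set (Module.End ℝ V)) := fun X hX =>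
      ⟨hu X hX, hstable X hX⟩
    intro X hX
    exact ((LieSubalgebra.lieSpan_le.mpr hLA) hX).1
  have hsub : (Submodule.span ℝ L : Set (Module.End ℝ V)) ⊆
      (LieSubalgebra.lieSpan ℝ (Module.End ℝ V) L : Set (Module.End ℝ V)) := by
    intro X hX
    have : Submodule.span ℝ L ≤
        (LieSubalgebra.lieSpan ℝ (Module.End ℝ V) L).toSubmodule :=
      Submodule.span_le.mpr (LieSubalgebra.subset_lieSpan)
    exact this hX
  constructor
  · constructor
    · intro h u hu
      exact h u fun X hX => hu X (Submodule.subset_span hX)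
    · intro h u hu
      exact h u fun X hX => key u hu X (hsub hX)
  · constructor
    · intro h u hu
      exact h u fun X hX => hu X (LieSubalgebra.subset_lieSpan hX)
    · intro h u hu
      exact h u fun X hX => key u hu X hX
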